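/- Let λ₁,…,λ_N > 0 and λ* ∈ [0,1] satisfy ∑_i ( (1−λ_i)/(λ* + (1−λ*)λ_i) + ln λ_i ) = 0. Then the common value D(Σ_{λ*}‖Σ₁') = D(Σ_{λ*}‖Σ₂') equals (1/2)∑_i ln( (1−λ*)√λ_i + λ*/√λ_i ) + (1/2)(λ* − 1/2) ln β, where β = ∏_i λ_i, Σ₁' = diag(λ_i), Σ₂' = I, and Σ_{λ*}⁻¹ = λ*Σ₁'⁻¹ + (1−λ*)Σ₂'⁻¹. -/

import Mathlib

theorem stmt_7 (N : ℕ) (l : Fin N → ℝ) (hl : ∀ i, 0 < l i) (ls : ℝ)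
    (hls : ls ∈ Set.Icc (0:ℝ) 1)
    (heq : ∑ i, ((1 - l i)/(ls + (1-ls)*l i) + Real.log (l i)) = 0) :
    let S1 : Matrix (Fin N) (Fin N) ℝ := Matrix.diagonal l
    let S2 : Matrix (Fin N) (Fin N) ℝ := 1
    let Slam := (ls • S1⁻¹ + (1-ls) • S2⁻¹)⁻¹
    let D : Matrix (Fin N) (Fin N) ℝ → Matrix (Fin N) (Fin N) ℝ → ℝ :=
      fun A B => (1/2)*Real.log (B.det / A.det) + (1/2)*(B⁻¹ * A).trace - N/2
    D Slam S1 = D Slam S2 ∧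
    D Slam S1 = (1/2) * ∑ i, Real.log ((1-ls)*Real.sqrt (l i) + ls/Real.sqrt (l i))
      + (1/2)*(ls - 1/2)*Real.log (∏ i, l i) := by
  intro S1 S2 Slam D
  obtain ⟨h0, h1⟩ := hls
  set d : Fin N → ℝ := fun i => ls + (1 - ls) * l i with hdd
  have hd : ∀ i, 0 < d i := by
    intro i
    have h2 : 0 ≤ (1 - ls) * l i := mul_nonneg (by linarith) (hl i).le
    have := hl i
    simp only [d]
    nlinarith [mul_nonneg (sub_nonneg.2 h1) (hl i).le, hl i,
      mul_nonneg h0 (hl i).le]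
  set μ : Fin N → ℝ := fun i => l i / d i with hμμ
  have hμpos : ∀ i, 0 < μ i := fun i => div_pos (hl i) (hd i)
  -- matrix computations
  have hS1inv : S1⁻¹ = Matrix.diagonal (fun i => (l i)⁻¹) := by
    apply Matrix.inv_eq_right_inv
    rw [Matrix.diagonal_mul_diagonal]
    convert Matrix.diagonal_one using 2
    funext i
    exact mul_inv_cancel₀ (hl i).ne'
  have hS2inv : S2⁻¹ = 1 := inv_one
  have hsum : ls • S1⁻¹ + (1 - ls) • S2⁻¹
      = Matrix.diagonal (fun i => ls * (l i)⁻¹ + (1 - ls)) := by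
    rw [hS1inv, hS2inv]
    ext i j
    by_cases h : i = j <;>
      simp [Matrix.diagonal_apply, Matrix.one_apply, h]
  have hval : ∀ i, (ls * (l i)⁻¹ + (1 - ls)) * μ i = 1 := by
    intro i
    have hli := (hl i).ne'
    have hdi := (hd i).ne'
    simp only [μ, d] at *
    field_simp
    apply div_self; contrapose! hdi; linarith
  have hSlam : Slam = Matrix.diagonal μ := by
    show (ls • S1⁻¹ + (1 - ls) • S2⁻¹)⁻¹ = _
    rw [hsum]
    apply Matrix.inv_eq_right_inv
    rw [Matrix.diagonal_mul_diagonal]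
    convert Matrix.diagonal_one using 2
    funext i
    exact hval i
  -- scalar key facts
  have hkey : ∑ i, (1 - l i) / d i = - ∑ i, Real.log (l i) := by
    rw [Finset.sum_add_distrib] at heq
    linarith
  have hlogμ : ∀ i, Real.log (μ i) = Real.log (l i) - Real.log (d i) :=
    fun i => Real.log_div (hl i).ne' (hd i).ne'
  -- determinants and traces
  have hdetS : Slam.det = ∏ i, μ i := by rw [hSlam, Matrix.det_diagonal]
  have hdetS1 : S1.det = ∏ i, l i := Matrix.det_diagonal
  have hdetSpos : 0 < Slam.det := by
    rw [hdetS]; exact Finset.prod_pos fun i _ => hμpos i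
  have hdetS1pos : 0 < (∏ i, l i) := Finset.prod_pos fun i _ => hl i
  have htr1 : (S1⁻¹ * Slam).trace = ∑ i, (l i)⁻¹ * μ i := by
    rw [hS1inv, hSlam, Matrix.diagonal_mul_diagonal, Matrix.trace_diagonal]
  have htr2 : (S2⁻¹ * Slam).trace = ∑ i, μ i := by
    rw [hS2inv, one_mul, hSlam, Matrix.trace_diagonal]
  -- sums in terms of K := ∑ (1-l)/d
  have hsum1 : ∑ i, (l i)⁻¹ * μ i = N + (1 - ls) * ∑ i, (1 - l i) / d i := by
    rw [Finset.mul_sum]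
    rw [show ((N : ℝ)) = ∑ _i : Fin N, (1:ℝ) by simp]
    rw [← Finset.sum_add_distrib]
    refine Finset.sum_congr rfl fun i _ => ?_
    have hli := (hl i).ne'
    have hdi := (hd i).ne'
    simp only [μ, d] at *
    rw [eq_comm, ← sub_eq_zero]
    field_simp
    ring
  have hsum2 : ∑ i, μ i = N - ls * ∑ i, (1 - l i) / d i := by
    rw [Finset.mul_sum]
    rw [show ((N : ℝ)) = ∑ _i : Fin N, (1:ℝ) by simp]
    rw [← Finset.sum_sub_distrib]
    refine Finset.sum_congr rfl fun i _ => ?_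
    have hli := (hl i).ne'
    have hdi := (hd i).ne'
    simp only [μ, d] at *
    rw [div_eq_iff hdi, sub_mul, mul_assoc, div_mul_cancel₀ _ hdi]
    ring
  -- log of determinant ratios
  have hlog1 : Real.log (S1.det / Slam.det)
      = ∑ i, Real.log (l i) - ∑ i, Real.log (μ i) := by
    rw [Real.log_div (by rw [hdetS1]; exact hdetS1pos.ne') hdetSpos.ne',
      hdetS, hdetS1, Real.log_prod (fun i _ => (hl i).ne'),
      Real.log_prod (fun i _ => (hμpos i).ne')]
  have hlog2 : Real.log (S2.det / Slam.det) = - ∑ i, Real.log (μ i) := by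
    have : S2.det = 1 := Matrix.det_one
    rw [this, one_div, Real.log_inv, hdetS,
      Real.log_prod (fun i _ => (hμpos i).ne')]
  have hsumlogμ : ∑ i, Real.log (μ i)
      = ∑ i, Real.log (l i) - ∑ i, Real.log (d i) := by
    rw [← Finset.sum_sub_distrib]
    exact Finset.sum_congr rfl fun i _ => hlogμ i
  -- target term
  have htgt : ∀ i, Real.log ((1 - ls) * Real.sqrt (l i) + ls / Real.sqrt (l i))
      = Real.log (d i) - (1/2) * Real.log (l i) := by
    intro i
    have hs : 0 < Real.sqrt (l i) := Real.sqrt_pos.2 (hl i)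
    have hsq : Real.sqrt (l i) * Real.sqrt (l i) = l i :=
      Real.mul_self_sqrt (hl i).le
    have harg : (1 - ls) * Real.sqrt (l i) + ls / Real.sqrt (l i)
        = d i / Real.sqrt (l i) := by
      rw [eq_div_iff hs.ne']
      simp only [d]
      field_simp
      nlinarith [hsq]
    rw [harg, Real.log_div (hd i).ne' hs.ne', Real.log_sqrt (hl i).le]
    ring
  have hlogprod : Real.log (∏ i, l i) = ∑ i, Real.log (l i) :=
    Real.log_prod (fun i _ => (hl i).ne')
  have htgtsum : ∑ i, Real.log ((1 - ls) * Real.sqrt (l i) + ls / Real.sqrt (l i))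
      = ∑ i, Real.log (d i) - (1/2) * ∑ i, Real.log (l i) := by
    rw [Finset.mul_sum, ← Finset.sum_sub_distrib]
    exact Finset.sum_congr rfl fun i _ => htgt i
  have hD1 : D Slam S1 = (1/2) * (∑ i, Real.log (l i) - ∑ i, Real.log (μ i))
      + (1/2) * (N + (1 - ls) * ∑ i, (1 - l i) / d i) - N/2 := by
    show (1/2)*Real.log (S1.det / Slam.det) + (1/2)*(S1⁻¹ * Slam).trace - N/2 = _
    rw [hlog1, htr1, hsum1]
  have hD2 : D Slam S2 = (1/2) * (- ∑ i, Real.log (μ i))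
      + (1/2) * (N - ls * ∑ i, (1 - l i) / d i) - N/2 := by
    show (1/2)*Real.log (S2.det / Slam.det) + (1/2)*(S2⁻¹ * Slam).trace - N/2 = _
    rw [hlog2, htr2, hsum2]
  constructor
  · rw [hD1, hD2, hkey]
    ring
  · rw [hD1, htgtsum, hlogprod, hsumlogμ, hkey]
    ring
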